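/- arXiv:2505.06691 — 2 statements merged into one kernel-verified Lean document; each statement's English description precedes it below -/
import Mathlib

section
/- Let A be Hurwitz, Q = Qᵀ > 0, P = Pᵀ > 0 with AᵀP + PA = −Q. Let G : ℝ → ℝ^N be differentiable satisfying G'(t) = (1/ω)(A G(t) + A e(t)) with ‖e(t)‖ ≤ σ̄ ‖G(t)‖ where σ̄ < λ_min(Q)/(2‖PA‖) and ω > 0. Then V(t) := G(t)ᵀ P G(t) satisfies V'(t) ≤ −(λ_min(Q)/ω)·(1 − 2‖PA‖σ̄/λ_min(Q))·‖G(t)‖² < 0 whenever G(t) ≠ 0. -/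
open Matrix
open scoped Matrix.Norms.L2Operator

/-- The Euclidean norm of a vector in `ℝ^N`. -/
noncomputable def eucNorm {N : ℕ} (x : Fin N → ℝ) : ℝ :=
  ‖(EuclideanSpace.equiv (Fin N) ℝ).symm x‖

/-- A real square matrix is Hurwitz if all of its (complex) eigenvalues have
negative real part. -/
def IsHurwitz {N : ℕ} (A : Matrix (Fin N) (Fin N) ℝ) : Prop :=
  ∀ μ ∈ spectrum ℂ (A.map (Complex.ofReal)), μ.re < 0

lemma enorm_sq {N : ℕ} (x : Fin N → ℝ) : eucNorm x ^ 2 = x ⬝ᵥ x := by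
  have h := real_inner_self_eq_norm_sq ((EuclideanSpace.equiv (Fin N) ℝ).symm x)
  rw [eucNorm, ← h, PiLp.inner_apply]
  simp [dotProduct, RCLike.inner_apply, PiLp.toLp_apply, sq]

lemma dot_le {N : ℕ} (x y : Fin N → ℝ) : x ⬝ᵥ y ≤ eucNorm x * eucNorm y := by
  have h := real_inner_le_norm ((EuclideanSpace.equiv (Fin N) ℝ).symm x)
    ((EuclideanSpace.equiv (Fin N) ℝ).symm y)
  rw [PiLp.inner_apply] at h
  simpa [eucNorm, dotProduct, RCLike.inner_apply, PiLp.toLp_apply, mul_comm] using h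

lemma enorm_mulVec_le {N : ℕ} (M : Matrix (Fin N) (Fin N) ℝ) (y : Fin N → ℝ) :
    eucNorm (M.mulVec y) ≤ ‖M‖ * eucNorm y :=
  M.l2_opNorm_mulVec ((EuclideanSpace.equiv (Fin N) ℝ).symm y)

lemma eucNorm_pos {N : ℕ} (x : Fin N → ℝ) (h : x ≠ 0) : 0 < eucNorm x := by
  rw [eucNorm, norm_pos_iff]
  simpa using h

lemma enorm_nonneg' {N : ℕ} (x : Fin N → ℝ) : 0 ≤ eucNorm x := norm_nonneg _

lemma quad_lower {N : ℕ} (Q : Matrix (Fin N) (Fin N) ℝ) (hQ : Q.IsHermitian)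
    (x : Fin N → ℝ) :
    (⨅ i, hQ.eigenvalues i) * (x ⬝ᵥ x) ≤ x ⬝ᵥ Q.mulVec x := by
  rcases Nat.eq_zero_or_pos N with h0 | h0
  · subst h0; simp [dotProduct]
  haveI : Nonempty (Fin N) := ⟨⟨0, h0⟩⟩
  set c := ⨅ i, hQ.eigenvalues i with hc
  have hcle : ∀ i, c ≤ hQ.eigenvalues i := fun i =>
    ciInf_le (Set.Finite.bddBelow (Set.finite_range _)) i
  have hU : (hQ.eigenvectorUnitary : Matrix (Fin N) (Fin N) ℝ) *
      star (hQ.eigenvectorUnitary : Matrix (Fin N) (Fin N) ℝ) = 1 :=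
    Matrix.mem_unitaryGroup_iff.mp hQ.eigenvectorUnitary.2
  have hR : Q - c • 1 = (hQ.eigenvectorUnitary : Matrix (Fin N) (Fin N) ℝ) *
      diagonal (fun i => hQ.eigenvalues i - c) *
      (hQ.eigenvectorUnitary : Matrix (Fin N) (Fin N) ℝ)ᴴ := by
    have hs := hQ.spectral_theorem
    have h1 : (c • (1 : Matrix (Fin N) (Fin N) ℝ)) =
        (hQ.eigenvectorUnitary : Matrix (Fin N) (Fin N) ℝ) * (c • 1) *
        star (hQ.eigenvectorUnitary : Matrix (Fin N) (Fin N) ℝ) := by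
      rw [mul_smul_comm, smul_mul_assoc, mul_one, hU]
    rw [Unitary.conjStarAlgAut_apply] at hs
    rw [star_eq_conjTranspose] at h1 hs
    conv_lhs => rw [hs]
    nth_rewrite 1 [h1]
    rw [← Matrix.sub_mul, ← Matrix.mul_sub]
    congr 1
    congr 1
    have : (c • (1 : Matrix (Fin N) (Fin N) ℝ)) = diagonal (fun _ => c) := by
      simp [smul_eq_diagonal_mul]
    rw [this, ← diagonal_sub]
    congr 1
  have hpsd : (Q - c • 1).PosSemidef := by
    rw [hR]
    exact (Matrix.posSemidef_diagonal_iff.mpr fun i => sub_nonneg.mpr (hcle i)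
      ).mul_mul_conjTranspose_same _
  have h := hpsd.dotProduct_mulVec_nonneg x
  simp only [star_trivial, RCLike.re_to_real] at h
  have hx : x ⬝ᵥ (Q - c • 1).mulVec x = x ⬝ᵥ Q.mulVec x - c * (x ⬝ᵥ x) := by
    rw [Matrix.sub_mulVec, dotProduct_sub]
    congr 1
    rw [Matrix.smul_mulVec, Matrix.one_mulVec, dotProduct_smul]
    rfl
  rw [hx] at h
  linarith

lemma deriv_quad {N : ℕ} (P : Matrix (Fin N) (Fin N) ℝ) (G : ℝ → Fin N → ℝ)
    (g' : Fin N → ℝ) (t : ℝ) (hG : HasDerivAt G g' t) :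
    HasDerivAt (fun s => G s ⬝ᵥ P.mulVec (G s))
      (g' ⬝ᵥ P.mulVec (G t) + G t ⬝ᵥ P.mulVec g') t := by
  have hcoord : ∀ i, HasDerivAt (fun s => G s i) (g' i) t := fun i =>
    (hasDerivAt_pi.mp hG) i
  have hinner : ∀ i, HasDerivAt (fun s => ∑ j, P i j * G s j) (∑ j, P i j * g' j) t :=
    fun i => HasDerivAt.fun_sum fun j _ => (hcoord j).const_mul (P i j)
  have h : HasDerivAt (fun s => ∑ i, G s i * ∑ j, P i j * G s j)
      (∑ i, (g' i * (∑ j, P i j * G t j) + G t i * ∑ j, P i j * g' j)) t :=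
    HasDerivAt.fun_sum fun i _ => (hcoord i).mul (hinner i)
  convert h using 1
  all_goals simp [dotProduct, mulVec, Finset.sum_add_distrib]

lemma dmv {N : ℕ} (M : Matrix (Fin N) (Fin N) ℝ) (u v : Fin N → ℝ) :
    u ⬝ᵥ (Mᵀ.mulVec v) = (M.mulVec u) ⬝ᵥ v := by
  rw [dotProduct_mulVec, vecMul_transpose]

lemma vprime_eq {N : ℕ} (A P Q : Matrix (Fin N) (Fin N) ℝ)
    (hPsymm : Pᵀ = P) (hlyap : Aᵀ * P + P * A = -Q) (ω : ℝ) (u e : Fin N → ℝ) :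
    ((1 / ω) • (A.mulVec u + A.mulVec e)) ⬝ᵥ P.mulVec u +
      u ⬝ᵥ P.mulVec ((1 / ω) • (A.mulVec u + A.mulVec e)) =
    (1 / ω) * (-(u ⬝ᵥ Q.mulVec u) + 2 * (u ⬝ᵥ (P * A).mulVec e)) := by
  have h1 : (A.mulVec u) ⬝ᵥ P.mulVec u = u ⬝ᵥ (Aᵀ * P).mulVec u := by
    rw [← mulVec_mulVec, dmv]
  have h2 : u ⬝ᵥ P.mulVec (A.mulVec u) = u ⬝ᵥ (P * A).mulVec u := by
    rw [← mulVec_mulVec]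
  have h3 : (A.mulVec e) ⬝ᵥ P.mulVec u = u ⬝ᵥ (P * A).mulVec e := by
    have h5 : Aᵀ * P = (P * A)ᵀ := by rw [Matrix.transpose_mul, hPsymm]
    calc A.mulVec e ⬝ᵥ P.mulVec u
        = e ⬝ᵥ (Aᵀ.mulVec (P.mulVec u)) := (dmv A e (P.mulVec u)).symm
      _ = e ⬝ᵥ ((P * A)ᵀ.mulVec u) := by rw [mulVec_mulVec, h5]
      _ = (P * A).mulVec e ⬝ᵥ u := dmv _ _ _
      _ = u ⬝ᵥ (P * A).mulVec e := dotProduct_comm _ _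
  have h4 : u ⬝ᵥ P.mulVec (A.mulVec e) = u ⬝ᵥ (P * A).mulVec e := by
    rw [← mulVec_mulVec]
  have hsum : u ⬝ᵥ (Aᵀ * P).mulVec u + u ⬝ᵥ (P * A).mulVec u = -(u ⬝ᵥ Q.mulVec u) := by
    rw [← dotProduct_add, ← Matrix.add_mulVec, hlyap, Matrix.neg_mulVec, dotProduct_neg]
  simp only [smul_dotProduct, Matrix.mulVec_smul, dotProduct_smul, add_dotProduct,
    Matrix.mulVec_add, dotProduct_add, smul_eq_mul, h1, h2, h3, h4]
  linear_combination (1 / ω) * hsum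

/-- Core Lyapunov decay estimate for the average closed-loop ET-NES system:
`V' ≤ -(λ_min(Q)/ω)(1 - 2‖PA‖σ̄/λ_min(Q))‖G‖²`, strictly negative off the origin. -/
theorem lyapunov_decay_estimate {N : ℕ} [NeZero N]
    (A Q P : Matrix (Fin N) (Fin N) ℝ)
    (hA : IsHurwitz A) (hQ : Q.PosDef) (hP : P.PosDef)
    (hlyap : Aᵀ * P + P * A = -Q)
    (ω σbar : ℝ) (hω : 0 < ω)
    (hσ : σbar < (⨅ i, hQ.1.eigenvalues i) / (2 * ‖P * A‖))
    (G e : ℝ → Fin N → ℝ)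
    (hG : ∀ t, HasDerivAt G ((1 / ω) • (A.mulVec (G t) + A.mulVec (e t))) t)
    (he : ∀ t, eucNorm (e t) ≤ σbar * eucNorm (G t)) :
    ∀ t : ℝ, ∃ v' : ℝ,
      HasDerivAt (fun s => G s ⬝ᵥ P.mulVec (G s)) v' t ∧
      v' ≤ -((⨅ i, hQ.1.eigenvalues i) / ω) *
            (1 - 2 * ‖P * A‖ * σbar / (⨅ i, hQ.1.eigenvalues i)) * eucNorm (G t) ^ 2 ∧
      (G t ≠ 0 → v' < 0) := by
  intro t
  haveI : Nonempty (Fin N) := ⟨⟨0, Nat.pos_of_ne_zero (NeZero.ne N)⟩⟩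
  set c := ⨅ i, hQ.1.eigenvalues i with hc
  set n := ‖P * A‖ with hn
  set g := eucNorm (G t) with hg
  have hn0 : 0 ≤ n := norm_nonneg _
  have hg0 : 0 ≤ g := enorm_nonneg' _
  -- positivity of c
  have hcpos : 0 < c := by
    obtain ⟨i, hi⟩ := Finite.exists_min (hQ.1.eigenvalues)
    have h1 : hQ.1.eigenvalues i ≤ c := le_ciInf hi
    exact lt_of_lt_of_le (hQ.eigenvalues_pos i) h1
  -- 2 n σbar < c
  have hkey : 2 * n * σbar < c := by
    rcases eq_or_lt_of_le hn0 with h | h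
    · rw [← h]; simpa using hcpos
    · rw [div_eq_mul_inv] at hσ
      have := (lt_div_iff₀ (by linarith : (0:ℝ) < 2 * n)).mp (by
        rw [div_eq_mul_inv]; exact hσ)
      nlinarith
  -- the derivative
  set g' := (1 / ω) • (A.mulVec (G t) + A.mulVec (e t)) with hg'
  refine ⟨g' ⬝ᵥ P.mulVec (G t) + G t ⬝ᵥ P.mulVec g', deriv_quad P G g' t (hG t), ?_, ?_⟩
  all_goals
    have hveq : g' ⬝ᵥ P.mulVec (G t) + G t ⬝ᵥ P.mulVec g' =
        (1 / ω) * (-(G t ⬝ᵥ Q.mulVec (G t)) + 2 * (G t ⬝ᵥ (P * A).mulVec (e t))) :=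
      vprime_eq A P Q (by rw [← conjTranspose_eq_transpose_of_trivial]; exact hP.1) hlyap ω (G t) (e t)
    have hquad : c * g ^ 2 ≤ G t ⬝ᵥ Q.mulVec (G t) := by
      rw [hg, enorm_sq]; exact quad_lower Q hQ.1 (G t)
    have hdot : G t ⬝ᵥ (P * A).mulVec (e t) ≤ n * σbar * g ^ 2 := by
      calc G t ⬝ᵥ (P * A).mulVec (e t) ≤ g * eucNorm ((P * A).mulVec (e t)) := dot_le _ _
        _ ≤ g * (n * eucNorm (e t)) :=
          mul_le_mul_of_nonneg_left (enorm_mulVec_le _ _) hg0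
        _ ≤ g * (n * (σbar * g)) :=
          mul_le_mul_of_nonneg_left (mul_le_mul_of_nonneg_left (he t) hn0) hg0
        _ = n * σbar * g ^ 2 := by ring
    have hωinv : 0 < 1 / ω := by positivity
    have hstep : g' ⬝ᵥ P.mulVec (G t) + G t ⬝ᵥ P.mulVec g' ≤
        (1 / ω) * (-(c * g ^ 2) + 2 * (n * σbar * g ^ 2)) := by
      rw [hveq]
      apply mul_le_mul_of_nonneg_left _ (le_of_lt hωinv)
      linarith
  · -- the main inequality
    have heq : (1 / ω) * (-(c * g ^ 2) + 2 * (n * σbar * g ^ 2)) =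
        -(c / ω) * (1 - 2 * n * σbar / c) * g ^ 2 := by
      field_simp
      ring
    rw [heq] at hstep
    exact hstep
  · -- strict negativity
    intro hGt
    have hgpos : 0 < g := eucNorm_pos _ hGt
    have : (1 / ω) * (-(c * g ^ 2) + 2 * (n * σbar * g ^ 2)) < 0 := by
      apply mul_neg_of_pos_of_neg hωinv
      nlinarith [mul_pos (sub_pos.mpr hkey) (pow_pos hgpos 2)]
    linarith
end

section
/- Let φ : [0,∞) → ℝ be differentiable with φ(0) = 0 and φ'(t) ≤ C·(k + φ(t))² for constants C, k > 0. Then φ(t) ≤ k/(1 − C k t) − k for all t ∈ [0, 1/(Ck)). Consequently the first time φ can reach the value 1 is at least τ* = 1/(C k (k+1)) > 0. -/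
open Set Filter Topology

/-- Key comparison step with a slightly larger constant `D > C`. -/
lemma riccati_key (C k D : ℝ) (hC : 0 < C) (hk : 0 < k) (hD : C < D)
    (φ φ' : ℝ → ℝ) (h0 : φ 0 = 0)
    (hderiv : ∀ t, 0 ≤ t → HasDerivAt φ (φ' t) t)
    (hineq : ∀ t, 0 ≤ t → φ' t ≤ C * (k + φ t) ^ 2)
    (t : ℝ) (ht0 : 0 ≤ t) (ht : D * k * t < 1) :
    φ t ≤ k / (1 - D * k * t) - k := by
  have hDk : 0 < D * k := mul_pos (hC.trans hD) hk
  set B : ℝ → ℝ := fun x => k / (1 - D * k * x) - k with hB_def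
  set B' : ℝ → ℝ := fun x => D * k ^ 2 / (1 - D * k * x) ^ 2 with hB'_def
  have hpos : ∀ x ∈ Icc (0:ℝ) t, 0 < 1 - D * k * x := by
    intro x hx
    have : D * k * x ≤ D * k * t := by
      exact mul_le_mul_of_nonneg_left hx.2 hDk.le
    linarith
  have hB' : ∀ x ∈ Ico (0:ℝ) t, HasDerivWithinAt B (B' x) (Ici x) x := by
    intro x hx
    have hx' : 0 < 1 - D * k * x := hpos x ⟨hx.1, hx.2.le⟩
    have hden : HasDerivAt (fun x : ℝ => 1 - D * k * x) (-(D * k)) x := by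
      simpa using ((hasDerivAt_id x).const_mul (D * k)).const_sub 1
    have : HasDerivAt (fun x : ℝ => k / (1 - D * k * x))
        ((0 * (1 - D * k * x) - k * (-(D * k))) / (1 - D * k * x) ^ 2) x :=
      (hasDerivAt_const x k).div hden hx'.ne'
    have h2 : HasDerivAt B ((0 * (1 - D * k * x) - k * (-(D * k))) / (1 - D * k * x) ^ 2) x :=
      this.sub_const k
    have heq : (0 * (1 - D * k * x) - k * (-(D * k))) / (1 - D * k * x) ^ 2 = B' x := by
      simp [hB'_def]; ring
    exact (heq ▸ h2).hasDerivWithinAt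
  have hf : ContinuousOn φ (Icc 0 t) :=
    fun x hx => ((hderiv x hx.1).continuousAt).continuousWithinAt
  have hf' : ∀ x ∈ Ico (0:ℝ) t, HasDerivWithinAt φ (φ' x) (Ici x) x :=
    fun x hx => (hderiv x hx.1).hasDerivWithinAt
  have hBc : ContinuousOn B (Icc 0 t) := by
    apply ContinuousOn.sub _ continuousOn_const
    exact ContinuousOn.div continuousOn_const (by fun_prop)
      (fun x hx => (hpos x hx).ne')
  have ha : φ 0 ≤ B 0 := by simp [hB_def, h0]
  have bound : ∀ x ∈ Ico (0:ℝ) t, φ x = B x → φ' x < B' x := by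
    intro x hx hfB
    have hx' : 0 < 1 - D * k * x := hpos x ⟨hx.1, hx.2.le⟩
    have hkB : k + B x = k / (1 - D * k * x) := by simp only [hB_def]; ring
    have hkBpos : 0 < k + B x := by rw [hkB]; positivity
    have h1 : φ' x ≤ C * (k + φ x) ^ 2 := hineq x hx.1
    rw [hfB] at h1
    have h2 : C * (k + B x) ^ 2 < D * (k + B x) ^ 2 :=
      mul_lt_mul_of_pos_right hD (by positivity)
    have h3 : D * (k + B x) ^ 2 = B' x := by
      rw [hkB]
      simp only [hB'_def]
      field_simp
    linarith
  have := image_le_of_deriv_right_lt_deriv_boundary' hf hf' ha hBc hB' bound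
    (right_mem_Icc.2 ht0)
  exact this

/-- Comparison lemma for the Riccati differential inequality `φ' ≤ C(k + φ)²`, `φ(0) = 0`:
`φ(t) ≤ k/(1 - Ckt) - k` on `[0, 1/(Ck))`, and `φ` stays below 1 before
`τ* = 1/(Ck(k+1)) > 0` (no Zeno behavior). -/
theorem riccati_comparison (C k : ℝ) (hC : 0 < C) (hk : 0 < k)
    (φ φ' : ℝ → ℝ) (h0 : φ 0 = 0)
    (hderiv : ∀ t, 0 ≤ t → HasDerivAt φ (φ' t) t)
    (hineq : ∀ t, 0 ≤ t → φ' t ≤ C * (k + φ t) ^ 2) :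
    (∀ t, 0 ≤ t → t < 1 / (C * k) → φ t ≤ k / (1 - C * k * t) - k) ∧
    (0 < 1 / (C * k * (k + 1)) ∧
      ∀ t, 0 ≤ t → t < 1 / (C * k * (k + 1)) → φ t < 1) := by
  have hCk : 0 < C * k := mul_pos hC hk
  have main : ∀ t, 0 ≤ t → t < 1 / (C * k) → φ t ≤ k / (1 - C * k * t) - k := by
    intro t ht0 ht
    have hCkt : C * k * t < 1 := by
      rw [lt_div_iff₀ hCk] at ht; linarith
    rcases eq_or_lt_of_le ht0 with h | h
    · simp [← h, h0]
    · -- t > 0 : take D → C⁺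
      have hClt : C < 1 / (k * t) := by
        rw [lt_div_iff₀ (by positivity)]
        nlinarith
      have htend : Tendsto (fun D : ℝ => k / (1 - D * k * t) - k) (𝓝[>] C)
          (𝓝 (k / (1 - C * k * t) - k)) := by
        have hne : (1 - C * k * t) ≠ 0 := by linarith
        have hcont : ContinuousAt (fun D : ℝ => k / (1 - D * k * t) - k) C := by
          apply ContinuousAt.sub _ continuousAt_const
          exact ContinuousAt.div continuousAt_const (by fun_prop) hne
        exact hcont.tendsto.mono_left nhdsWithin_le_nhds
      have hev : ∀ᶠ D in 𝓝[>] C, φ t ≤ k / (1 - D * k * t) - k := by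
        filter_upwards [Ioo_mem_nhdsGT_of_mem ⟨le_refl C, hClt⟩] with D hD
        have hDkt : D * k * t < 1 := by
          have := hD.2
          rw [lt_div_iff₀ (by positivity)] at this
          nlinarith
        exact riccati_key C k D hC hk hD.1 φ φ' h0 hderiv hineq t ht0 hDkt
      exact ge_of_tendsto htend hev
  refine ⟨main, by positivity, ?_⟩
  intro t ht0 ht
  have hk1 : 0 < C * k * (k + 1) := by positivity
  have hCkt1 : C * k * (k + 1) * t < 1 := by
    have := (lt_div_iff₀ hk1).mp ht; nlinarith
  have ht' : t < 1 / (C * k) := by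
    rw [lt_div_iff₀ hCk]; nlinarith
  have h1 := main t ht0 ht'
  have hpos : 0 < 1 - C * k * t := by
    rw [lt_div_iff₀ hCk] at ht'; linarith
  have : k / (1 - C * k * t) < k + 1 := by
    rw [div_lt_iff₀ hpos]; nlinarith
  linarith
end
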